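/- Let (L, R) be an orthogonal factorization system on a category C. Then the full subcategory Ar^L(C) of the arrow category spanned by morphisms in L, equipped with the source functor ev₀ : Ar^L(C) ⥤ C, is a fibered category (Grothendieck fibration); moreover, a morphism (α, β) : (f : x₀ → x₁) → (g : y₀ → y₁) in Ar^L(C) (i.e. a commutative square with f, g ∈ L) is ev₀-cartesian if and only if the target component β : x₁ → y₁ lies in R. -/

import Mathlib

open CategoryTheory

universe v u v' u'

/-- An orthogonal factorization system `(L, R)` on a category `C`. -/
structure IsOFS {C : Type u} [Category.{v} C] (L R : MorphismProperty C) : Prop where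
  L_iso : ∀ {X Y : C} (f : X ⟶ Y), IsIso f → L f
  R_iso : ∀ {X Y : C} (f : X ⟶ Y), IsIso f → R f
  L_comp : ∀ {X Y Z : C} (f : X ⟶ Y) (g : Y ⟶ Z), L f → L g → L (f ≫ g)
  R_comp : ∀ {X Y Z : C} (f : X ⟶ Y) (g : Y ⟶ Z), R f → R g → R (f ≫ g)
  factor : ∀ {X Y : C} (f : X ⟶ Y),
    ∃ (Z : C) (l : X ⟶ Z) (r : Z ⟶ Y), L l ∧ R r ∧ l ≫ r = f
  lift : ∀ {A B X Y : C} (l : A ⟶ B) (r : X ⟶ Y), L l → R r →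
    ∀ (u : A ⟶ X) (v : B ⟶ Y), l ≫ v = u ≫ r →
      ∃! d : B ⟶ X, l ≫ d = u ∧ d ≫ r = v

/-- A morphism `φ : x ⟶ y` is `P`-cartesian if every `ψ : z ⟶ y` with a factorization of
`P.map ψ` through `P.map φ` lifts uniquely. -/
def IsCartesianMor {E : Type u'} [Category.{v'} E] {C : Type u} [Category.{v} C]
    (P : E ⥤ C) {x y : E} (φ : x ⟶ y) : Prop :=
  ∀ (z : E) (ψ : z ⟶ y) (h : P.obj z ⟶ P.obj x), h ≫ P.map φ = P.map ψ →
    ∃! χ : z ⟶ x, P.map χ = h ∧ χ ≫ φ = ψ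

/-- A functor `P : E ⥤ C` is a Grothendieck fibration if every morphism of `C` into the image
of an object admits a cartesian lift. -/
def IsGrothendieckFibration {E : Type u'} [Category.{v'} E] {C : Type u} [Category.{v} C]
    (P : E ⥤ C) : Prop :=
  ∀ (y : E) (c : C) (g : c ⟶ P.obj y),
    ∃ (x : E) (e : P.obj x = c) (φ : x ⟶ y),
      P.map φ = eqToHom e ≫ g ∧ IsCartesianMor P φ

variable {C : Type u} [Category.{v} C]

/-- The full subcategory of the arrow category on the morphisms in `L`. -/
abbrev ArrowL (L : MorphismProperty C) := ObjectProperty.FullSubcategory (fun f : Arrow C => L f.hom)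

/-- The source functor `ev₀ : Ar^L(C) ⥤ C`. -/
abbrev evSource (L : MorphismProperty C) : ArrowL L ⥤ C :=
  ObjectProperty.ι _ ⋙ Arrow.leftFunc

lemma ArrowL.hom_ext {L : MorphismProperty C} {f g : ArrowL L} (m m' : f ⟶ g)
    (h1 : (m.hom : f.obj ⟶ g.obj).left = m'.hom.left) (h2 : (m.hom : f.obj ⟶ g.obj).right = m'.hom.right) :
    m = m' := by
  apply InducedCategory.hom_ext; apply CommaMorphism.ext <;> assumption

@[simp] lemma ArrowL.comp_left {L : MorphismProperty C} {a b c : ArrowL L}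
    (u : a ⟶ b) (v : b ⟶ c) :
    ((u ≫ v : a ⟶ c).hom : a.obj ⟶ c.obj).left = (u.hom : a.obj ⟶ b.obj).left ≫ (v.hom : b.obj ⟶ c.obj).left := rfl

@[simp] lemma ArrowL.comp_right {L : MorphismProperty C} {a b c : ArrowL L}
    (u : a ⟶ b) (v : b ⟶ c) :
    ((u ≫ v : a ⟶ c).hom : a.obj ⟶ c.obj).right = (u.hom : a.obj ⟶ b.obj).right ≫ (v.hom : b.obj ⟶ c.obj).right := rfl

@[simp] lemma ArrowL.id_right {L : MorphismProperty C} (a : ArrowL L) :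
    ((𝟙 a : a ⟶ a).hom : a.obj ⟶ a.obj).right = 𝟙 a.obj.right := rfl

lemma ArrowL.w {L : MorphismProperty C} {a b : ArrowL L} (u : a ⟶ b) :
    (u.hom : a.obj ⟶ b.obj).left ≫ b.obj.hom = a.obj.hom ≫ (u.hom : a.obj ⟶ b.obj).right := by
  have := (u.hom : a.obj ⟶ b.obj).w
  simpa using this

lemma cart_of_R {L R : MorphismProperty C} (h : IsOFS L R)
    {f g : ArrowL L} (m : f ⟶ g) (hR : R (m.hom : f.obj ⟶ g.obj).right) :
    IsCartesianMor (evSource L) m := by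
  intro z ψ hm hcomm
  have hcomm' : (hm ≫ m.hom.left : z.obj.left ⟶ g.obj.left) = ψ.hom.left := hcomm
  have sq : z.obj.hom ≫ ψ.hom.right = (hm ≫ f.obj.hom) ≫ m.hom.right := by
    rw [← ArrowL.w ψ, ← hcomm']
    exact (Category.assoc _ _ _).trans ((congrArg (hm ≫ ·) (ArrowL.w m)).trans (Category.assoc _ _ _).symm)
  obtain ⟨d, ⟨hd1, hd2⟩, hduniq⟩ :=
    h.lift z.obj.hom m.hom.right z.property hR (hm ≫ f.obj.hom) ψ.hom.right sq
  refine ⟨⟨⟨hm, d, by simp [hd1]; rfl⟩⟩, ⟨rfl, ?_⟩, ?_⟩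
  · exact ArrowL.hom_ext _ _ hcomm' hd2
  · rintro χ ⟨hχ1, hχ2⟩
    have hl : (χ.hom : z.obj ⟶ f.obj).left = hm := hχ1
    refine ArrowL.hom_ext _ _ hl (hduniq χ.hom.right ⟨?_, ?_⟩)
    · rw [← ArrowL.w χ, hl]; rfl
    · have := congrArg (fun t => (t.hom : z.obj ⟶ g.obj).right) hχ2
      simpa using this

/-- Given an orthogonal factorization system `(L, R)` on `C`, the source functor
`ev₀ : Ar^L(C) ⥤ C` is a Grothendieck fibration, and a morphism of `Ar^L(C)` is
`ev₀`-cartesian if and only if its target component lies in `R`. -/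
theorem evSource_isFibration_and_cartesian_iff
    (L R : MorphismProperty C) (h : IsOFS L R) :
    IsGrothendieckFibration (evSource L) ∧
      ∀ (f g : ArrowL L) (m : f ⟶ g),
        IsCartesianMor (evSource L) m ↔ R ((m.hom : f.obj ⟶ g.obj).right) := by
  constructor
  · intro y c g0
    obtain ⟨Z, l, r, hl, hr, hfact⟩ := h.factor (g0 ≫ y.obj.hom)
    refine ⟨⟨Arrow.mk l, hl⟩, rfl, ⟨⟨g0, r, hfact.symm⟩⟩, (Category.id_comp g0).symm, ?_⟩
    exact cart_of_R h _ hr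
  · intro f g m
    refine ⟨fun hcart => ?_, fun hR => cart_of_R h m hR⟩
    obtain ⟨Z, l, r, hl, hr, hfact⟩ := h.factor (m.hom : f.obj ⟶ g.obj).right
    set z : ArrowL L := ⟨Arrow.mk (f.obj.hom ≫ l), h.L_comp _ _ f.property hl⟩ with hz
    have sqψ : (m.hom.left : f.obj.left ⟶ g.obj.left) ≫ g.obj.hom = (f.obj.hom ≫ l) ≫ r := by
      rw [Category.assoc, hfact]; exact ArrowL.w m
    obtain ⟨χ, ⟨hχ1, hχ2⟩, _⟩ :=
      hcart z (⟨⟨m.hom.left, r, sqψ⟩⟩ : z ⟶ g) (𝟙 _) (Category.id_comp _)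
    have hχl : (χ.hom : z.obj ⟶ f.obj).left = 𝟙 _ := hχ1
    have hχw : f.obj.hom ≫ l ≫ χ.hom.right = f.obj.hom := by
      have hw := ArrowL.w χ
      rw [hχl, Category.id_comp] at hw
      rw [← Category.assoc]; exact hw.symm
    have hχr : (χ.hom : z.obj ⟶ f.obj).right ≫ m.hom.right = r := by
      have := congrArg (fun t => (t.hom : z.obj ⟶ g.obj).right) hχ2
      simpa using this
    obtain ⟨χ', hχ'ex, hχ'uniq⟩ := hcart f m (𝟙 _) (by simp)
    have e1 : (𝟙 f : f ⟶ f) = χ' := hχ'uniq _ ⟨rfl, by simp⟩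
    have c2 : (⟨(⟨𝟙 _, l ≫ χ.hom.right, by
          simpa using hχw.symm⟩ : f.obj ⟶ f.obj)⟩ : f ⟶ f) = χ' := by
      apply hχ'uniq
      refine ⟨rfl, ?_⟩
      apply ArrowL.hom_ext
      · show 𝟙 _ ≫ m.hom.left = m.hom.left; simp
      · show (l ≫ χ.hom.right) ≫ m.hom.right = m.hom.right
        rw [Category.assoc, hχr, hfact]
    have hlc : l ≫ χ.hom.right = 𝟙 f.obj.right := by
      have := congrArg (fun t => (t.hom : f.obj ⟶ f.obj).right) (c2.trans e1.symm)
      simpa using this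
    obtain ⟨d, _, hduniq⟩ := h.lift l r hl hr l r rfl
    have hcl : χ.hom.right ≫ l = 𝟙 Z := by
      have h1 := hduniq (χ.hom.right ≫ l)
        ⟨by rw [← Category.assoc, hlc, Category.id_comp], by rw [Category.assoc, hfact, hχr]⟩
      have h2 := hduniq (𝟙 Z) ⟨by simp, by simp⟩
      exact h1.trans h2.symm
    have : IsIso l := ⟨χ.hom.right, hlc, hcl⟩
    rw [← hfact]
    exact h.R_comp l r (h.R_iso l this) hr
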